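/- Let X be an n-independent set of d(n,k−2)+2 points with k ≤ n−1, such that the space of polynomials of degree ≤ k vanishing on X has dimension at least 4. If additionally there exists a nonzero polynomial of degree ≤ k−1 vanishing on all of X, then all points of X except two lie on a maximal curve of degree k−2. -/

import Mathlib

open MvPolynomial
open scoped Classical

/-- Evaluation of a bivariate polynomial at a point of the plane. -/
noncomputable def evalPt (p : MvPolynomial (Fin 2) ℝ) (A : ℝ × ℝ) : ℝ :=
  MvPolynomial.eval ![A.1, A.2] p

/-- `p` is an `n`-fundamental polynomial of the node `A` with respect to the node set `X`. -/
def IsFund (n : ℕ) (X : Finset (ℝ × ℝ)) (A : ℝ × ℝ)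
    (p : MvPolynomial (Fin 2) ℝ) : Prop :=
  p.totalDegree ≤ n ∧ evalPt p A = 1 ∧ ∀ B ∈ X, B ≠ A → evalPt p B = 0

/-- The node set `X` is `n`-independent. -/
def Indep (n : ℕ) (X : Finset (ℝ × ℝ)) : Prop :=
  ∀ A ∈ X, ∃ p, IsFund n X A p

/-- `d(n,k) = N_n - N_{n-k} = k(2n+3-k)/2`. -/
def dd (n k : ℕ) : ℕ := k * (2 * n + 3 - k) / 2

/-- The node set `X` is `n`-poised. -/
def Poised (n : ℕ) (X : Finset (ℝ × ℝ)) : Prop :=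
  X.card = (n + 1) * (n + 2) / 2 ∧
  ∀ p : MvPolynomial (Fin 2) ℝ, p.totalDegree ≤ n →
    (∀ A ∈ X, evalPt p A = 0) → p = 0

/-- The space of polynomials of total degree at most `n` vanishing on `X`. -/
noncomputable def vanishSp (n : ℕ) (X : Finset (ℝ × ℝ)) :
    Submodule ℝ (MvPolynomial (Fin 2) ℝ) :=
  MvPolynomial.restrictTotalDegree (Fin 2) ℝ n ⊓
    ⨅ A ∈ X, LinearMap.ker ((MvPolynomial.aeval (R := ℝ) ![A.1, A.2]).toLinearMap)


namespace Th17
noncomputable section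

open Finset

abbrev Pl := MvPolynomial (Fin 2) ℝ
abbrev Sn (n : ℕ) : Submodule ℝ Pl := MvPolynomial.restrictTotalDegree (Fin 2) ℝ n

/-! ### Arithmetic -/

def Nn (m : ℕ) : ℕ := (m + 1) * (m + 2) / 2

lemma Nn_succ (m : ℕ) : Nn (m + 1) = Nn m + (m + 2) := by
  unfold Nn
  have h : (m + 1 + 1) * (m + 1 + 2) = (m + 1) * (m + 2) + (m + 2) * 2 := by ring
  rw [h, Nat.add_mul_div_right _ _ (by norm_num)]

lemma Nn_mono : Monotone Nn := by
  apply monotone_nat_of_le_succ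
  intro m; rw [Nn_succ]; omega

lemma Nn_pos (m : ℕ) : 1 ≤ Nn m := by
  unfold Nn
  have : (m + 1) * (m + 2) ≥ 2 := by nlinarith
  omega

lemma dd_succ (n j : ℕ) (h : j ≤ n) : dd n (j + 1) = dd n j + (n + 1 - j) := by
  unfold dd
  have h1 : (j + 1) * (2 * n + 3 - (j + 1)) = j * (2 * n + 3 - j) + (n + 1 - j) * 2 := by
    have hj : 2 * n + 3 - (j + 1) = 2 * n + 2 - j := by omega
    rw [hj]
    have e1 : j * (2 * n + 2 - j) + (2 * n + 2 - j) = (j + 1) * (2 * n + 2 - j) := by ring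
    have e2 : j * (2 * n + 3 - j) = j * (2 * n + 2 - j) + j := by
      have hj2 : 2 * n + 3 - j = (2 * n + 2 - j) + 1 := by omega
      rw [hj2]; ring
    omega
  rw [h1, Nat.add_mul_div_right _ _ (by norm_num)]

lemma dd_Nn (n j : ℕ) (h : j ≤ n) : dd n j + Nn (n - j) = Nn n := by
  induction j with
  | zero => simp [dd]
  | succ i ih =>
      have hi : i ≤ n := by omega
      rw [dd_succ n i hi]
      have h2 : n - i = (n - (i + 1)) + 1 := by omega
      have h3 := Nn_succ (n - (i + 1))
      rw [h2, h3] at ih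
      omega

/-! ### Dimension of the space of polynomials of degree at most `m` -/

def Tfin (m : ℕ) : Finset (ℕ × ℕ) := (range (m + 1)).biUnion (fun k => Finset.HasAntidiagonal.antidiagonal k)

lemma mem_Tfin {m : ℕ} {x : ℕ × ℕ} : x ∈ Tfin m ↔ x.1 + x.2 ≤ m := by
  simp only [Tfin, mem_biUnion, mem_range, Finset.HasAntidiagonal.mem_antidiagonal]
  constructor
  · rintro ⟨k, hk, rfl⟩; omega
  · intro h; exact ⟨x.1 + x.2, by omega, rfl⟩

lemma card_Tfin (m : ℕ) : (Tfin m).card = Nn m := by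
  induction m with
  | zero => decide
  | succ i ih =>
      have hT : Tfin (i + 1) = Tfin i ∪ Finset.HasAntidiagonal.antidiagonal (i + 1) := by
        ext x
        simp only [mem_Tfin, Finset.mem_union, Finset.HasAntidiagonal.mem_antidiagonal]
        omega
      rw [hT, Finset.card_union_of_disjoint, ih, Nat.card_antidiagonal, Nn_succ]
      rw [Finset.disjoint_left]
      intro x hx hx2
      rw [mem_Tfin] at hx
      rw [Finset.HasAntidiagonal.mem_antidiagonal] at hx2
      omega

lemma card_degset (m : ℕ) :
    Nat.card {d : Fin 2 →₀ ℕ | (d.sum fun _ e => e) ≤ m} = Nn m := by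
  have e1 : {d : Fin 2 →₀ ℕ | (d.sum fun _ e => e) ≤ m} ≃ {x : ℕ × ℕ // x ∈ Tfin m} := by
    refine Equiv.subtypeEquiv (Finsupp.equivFunOnFinite.trans (finTwoArrowEquiv ℕ)) ?_
    intro d
    simp only [Set.mem_setOf_eq, mem_Tfin]
    rw [Finsupp.sum_fintype _ _ (fun _ => rfl), Fin.sum_univ_two]
    rfl
  rw [Nat.card_congr e1, Nat.card_eq_finsetCard, card_Tfin]

lemma finrank_restrict (m : ℕ) :
    Module.finrank ℝ (MvPolynomial.restrictTotalDegree (Fin 2) ℝ m) = Nn m := by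
  have b := MvPolynomial.basisRestrictSupport ℝ {d : Fin 2 →₀ ℕ | (d.sum fun _ e => e) ≤ m}
  rw [show MvPolynomial.restrictTotalDegree (Fin 2) ℝ m
      = MvPolynomial.restrictSupport ℝ {d : Fin 2 →₀ ℕ | (d.sum fun _ e => e) ≤ m} from rfl,
    Module.finrank_eq_nat_card_basis b, card_degset]

/-! ### Exact additivity of total degree for products -/

lemma fsum_eq (d : Fin 2 →₀ ℕ) : (d.sum fun _ e => e) = d 0 + d 1 := by
  rw [Finsupp.sum_fintype _ _ (fun _ => rfl), Fin.sum_univ_two]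

lemma fin2_ext {u v : Fin 2 →₀ ℕ} (h0 : u 0 = v 0) (h1 : u 1 = v 1) : u = v := by
  ext i
  fin_cases i <;> assumption

lemma totalDegree_mul_eq {p q : Pl} (hp : p ≠ 0) (hq : q ≠ 0) :
    (p * q).totalDegree = p.totalDegree + q.totalDegree := by
  refine le_antisymm (MvPolynomial.totalDegree_mul p q) ?_
  have hps := MvPolynomial.support_nonempty.mpr hp
  have hqs := MvPolynomial.support_nonempty.mpr hq
  have hS1 : ((p.support.filter (fun d => (d.sum fun _ e => e) = p.totalDegree))).Nonempty := by
    obtain ⟨b, hb, hbe⟩ := Finset.exists_mem_eq_sup _ hps (fun s => s.sum fun _ e => e)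
    exact ⟨b, Finset.mem_filter.mpr ⟨hb, hbe.symm⟩⟩
  have hS2 : ((q.support.filter (fun d => (d.sum fun _ e => e) = q.totalDegree))).Nonempty := by
    obtain ⟨b, hb, hbe⟩ := Finset.exists_mem_eq_sup _ hqs (fun s => s.sum fun _ e => e)
    exact ⟨b, Finset.mem_filter.mpr ⟨hb, hbe.symm⟩⟩
  obtain ⟨dp, hdp, hdpmax⟩ := Finset.exists_max_image _ (fun d => d 0) hS1
  obtain ⟨dq, hdq, hdqmax⟩ := Finset.exists_max_image _ (fun d => d 0) hS2
  rw [Finset.mem_filter] at hdp hdq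
  have key : MvPolynomial.coeff (dp + dq) (p * q)
      = MvPolynomial.coeff dp p * MvPolynomial.coeff dq q := by
    rw [MvPolynomial.coeff_mul]
    apply Finset.sum_eq_single_of_mem (dp, dq) (Finset.HasAntidiagonal.mem_antidiagonal.mpr rfl)
    rintro ⟨u, v⟩ huv hne
    rw [Finset.HasAntidiagonal.mem_antidiagonal] at huv
    by_cases hu : u ∈ p.support
    · by_cases hv : v ∈ q.support
      · exfalso
        have h1 : (u.sum fun _ e => e) ≤ p.totalDegree := MvPolynomial.le_totalDegree hu
        have h2 : (v.sum fun _ e => e) ≤ q.totalDegree := MvPolynomial.le_totalDegree hv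
        have h0 : u 0 + v 0 = dp 0 + dq 0 := by
          rw [← Finsupp.add_apply, huv, Finsupp.add_apply]
        have h1' : u 1 + v 1 = dp 1 + dq 1 := by
          rw [← Finsupp.add_apply, huv, Finsupp.add_apply]
        have eu := fsum_eq u
        have ev := fsum_eq v
        have edp := fsum_eq dp
        have edq := fsum_eq dq
        have edp2 := hdp.2
        have edq2 := hdq.2
        have hsum : (u.sum fun _ e => e) + (v.sum fun _ e => e)
            = p.totalDegree + q.totalDegree := by omega
        have hu1 : (u.sum fun _ e => e) = p.totalDegree := by omega
        have hv1 : (v.sum fun _ e => e) = q.totalDegree := by omega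
        have hu0 : u 0 ≤ dp 0 := hdpmax u (Finset.mem_filter.mpr ⟨hu, hu1⟩)
        have hv0 : v 0 ≤ dq 0 := hdqmax v (Finset.mem_filter.mpr ⟨hv, hv1⟩)
        have hueq : u = dp := fin2_ext (by omega) (by omega)
        have hveq : v = dq := fin2_ext (by omega) (by omega)
        exact hne (Prod.ext hueq hveq)
      · rw [MvPolynomial.notMem_support_iff.mp hv, mul_zero]
    · rw [MvPolynomial.notMem_support_iff.mp hu, zero_mul]
  have hcne : MvPolynomial.coeff (dp + dq) (p * q) ≠ 0 := by
    rw [key]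
    exact mul_ne_zero (MvPolynomial.mem_support_iff.mp hdp.1)
      (MvPolynomial.mem_support_iff.mp hdq.1)
  have hmem : dp + dq ∈ (p * q).support := MvPolynomial.mem_support_iff.mpr hcne
  calc p.totalDegree + q.totalDegree = ((dp + dq).sum fun _ e => e) := by
        rw [fsum_eq, Finsupp.add_apply, Finsupp.add_apply, ← hdp.2, ← hdq.2, fsum_eq, fsum_eq]
        ring
    _ ≤ (p * q).totalDegree := MvPolynomial.le_totalDegree hmem

/-! ### Evaluation functionals and the fundamental counting bound -/

def evl (A : ℝ × ℝ) : Pl →ₗ[ℝ] ℝ :=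
  ((MvPolynomial.aeval (R := ℝ) ![A.1, A.2]).toLinearMap : Pl →ₗ[ℝ] ℝ)

lemma evl_apply (p : Pl) (A : ℝ × ℝ) : evl A p = evalPt p A := by
  simp only [evl, AlgHom.toLinearMap_apply, evalPt]
  rw [MvPolynomial.aeval_def, Algebra.algebraMap_self]
  rfl

lemma evalPt_mul (a b : Pl) (A : ℝ × ℝ) : evalPt (a * b) A = evalPt a A * evalPt b A := by
  simp [evalPt]
lemma evalPt_add (a b : Pl) (A : ℝ × ℝ) : evalPt (a + b) A = evalPt a A + evalPt b A := by
  simp [evalPt]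
lemma evalPt_one (A : ℝ × ℝ) : evalPt 1 A = 1 := by simp [evalPt]
lemma evalPt_C (c : ℝ) (A : ℝ × ℝ) : evalPt (MvPolynomial.C c) A = c := by simp [evalPt]

lemma card_le_of_vanish (n : ℕ) (X : Finset (ℝ × ℝ)) (hX : Indep n X)
    (Y : Finset (ℝ × ℝ)) (hY : Y ⊆ X) (V : Submodule ℝ Pl)
    (hVS : V ≤ Sn n) (hvan : ∀ p ∈ V, ∀ A ∈ Y, evalPt p A = 0) :
    Y.card + Module.finrank ℝ V ≤ Nn n := by
  have hfd : FiniteDimensional ℝ (Sn n) := by infer_instance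
  set V' : Submodule ℝ (Sn n) := V.comap (Sn n).subtype with hV'
  have hfr : Module.finrank ℝ V' = Module.finrank ℝ V :=
    LinearEquiv.finrank_eq (Submodule.comapSubtypeEquivOfLe hVS)
  set ε : (ℝ × ℝ) → Module.Dual ℝ (Sn n) := fun A => (evl A).comp (Sn n).subtype with hε
  have hker : ∀ A ∈ Y, V' ≤ LinearMap.ker (ε A) := by
    intro A hA x hx
    simp only [LinearMap.mem_ker, hε, LinearMap.comp_apply, Submodule.subtype_apply]
    rw [evl_apply]
    exact hvan _ hx A hA
  set φ : ↥Y → Module.Dual ℝ ((Sn n) ⧸ V') :=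
    fun A => V'.liftQ (ε A.1) (hker A.1 A.2) with hφ
  have hcomp : ∀ A : ↥Y, (V'.mkQ.dualMap) (φ A) = ε A.1 := by
    intro A
    apply LinearMap.ext
    intro x
    simp [φ, LinearMap.dualMap_apply]
  have hind : LinearIndependent ℝ (fun A : ↥Y => ε A.1) := by
    rw [Fintype.linearIndependent_iff]
    intro g hg B
    obtain ⟨pB, hpB⟩ := hX B.1 (hY B.2)
    have hpBS : pB ∈ Sn n := (MvPolynomial.mem_restrictTotalDegree _ _ _).mpr hpB.1
    have hg' := congrArg (fun (f : Module.Dual ℝ (Sn n)) => f ⟨pB, hpBS⟩) hg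
    simp only [LinearMap.coe_sum, Finset.sum_apply, LinearMap.smul_apply, smul_eq_mul,
      LinearMap.zero_apply] at hg'
    rw [Finset.sum_eq_single B] at hg'
    · simpa [hε, evl_apply, hpB.2.1] using hg'
    · intro A _ hAB
      have hz : evalPt pB A.1 = 0 := hpB.2.2 A.1 (hY A.2) (fun h => hAB (Subtype.ext h))
      simp [hε, evl_apply, hz]
    · intro h
      exact absurd (Finset.mem_univ B) h
  have hindφ : LinearIndependent ℝ φ := by
    apply LinearIndependent.of_comp (V'.mkQ.dualMap)
    have hc : (V'.mkQ.dualMap) ∘ φ = fun A : ↥Y => ε A.1 := funext hcomp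
    rw [hc]
    exact hind
  have hcard : Y.card ≤ Module.finrank ℝ (Module.Dual ℝ ((Sn n) ⧸ V')) := by
    rw [← Fintype.card_coe Y]
    exact LinearIndependent.fintype_card_le_finrank hindφ
  rw [Subspace.dual_finrank_eq] at hcard
  have hqr := Submodule.finrank_quotient_add_finrank V'
  have hSfr : Module.finrank ℝ (Sn n) = Nn n := finrank_restrict n
  omega

/-! ### Product submodules -/

def Mg (g : Pl) (m : ℕ) : Submodule ℝ Pl := (Sn m).map (LinearMap.mulLeft ℝ g)

lemma mem_Mg {g x : Pl} {m : ℕ} : x ∈ Mg g m ↔ ∃ c : Pl, c.totalDegree ≤ m ∧ x = g * c := by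
  simp only [Mg, Submodule.mem_map, LinearMap.mulLeft_apply]
  constructor
  · rintro ⟨c, hc, rfl⟩
    exact ⟨c, (MvPolynomial.mem_restrictTotalDegree _ _ _).mp hc, rfl⟩
  · rintro ⟨c, hc, rfl⟩
    exact ⟨c, (MvPolynomial.mem_restrictTotalDegree _ _ _).mpr hc, rfl⟩

lemma finrank_Mg {g : Pl} (hg : g ≠ 0) (m : ℕ) : Module.finrank ℝ (Mg g m) = Nn m := by
  have hinj : Function.Injective (LinearMap.mulLeft ℝ g) := by
    intro a b hab
    simpa using mul_left_cancel₀ hg (by simpa using hab)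
  rw [← finrank_restrict m]
  exact (LinearEquiv.finrank_eq
    (Submodule.equivMapOfInjective (LinearMap.mulLeft ℝ g) hinj (Sn m))).symm

instance Mg_findim (g : Pl) (m : ℕ) : FiniteDimensional ℝ (Mg g m) :=
  Module.Finite.map _ _

lemma Mg_le_Sn {g : Pl} {m n : ℕ} (h : g.totalDegree + m ≤ n) : Mg g m ≤ Sn n := by
  intro x hx
  obtain ⟨c, hc, rfl⟩ := mem_Mg.mp hx
  rw [MvPolynomial.mem_restrictTotalDegree]
  exact le_trans (MvPolynomial.totalDegree_mul g c) (by omega)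

lemma Mg_vanish {g x : Pl} {m : ℕ} (hx : x ∈ Mg g m) {A : ℝ × ℝ} (hA : evalPt g A = 0) :
    evalPt x A = 0 := by
  obtain ⟨c, _, rfl⟩ := mem_Mg.mp hx
  rw [evalPt_mul, hA, zero_mul]

lemma inf_Mg_le {g qh ph : Pl} (hg : g ≠ 0) (hph : ph ≠ 0)
    (hrel : IsRelPrime ph qh) {mq mp : ℕ} :
    Mg (g * qh) mq ⊓ Mg (g * ph) mp ≤ Mg (g * qh * ph) (mq - ph.totalDegree) := by
  rintro x ⟨hx1, hx2⟩
  obtain ⟨a, ha, rfl⟩ := mem_Mg.mp hx1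
  obtain ⟨b, hb, hab⟩ := mem_Mg.mp hx2
  by_cases hxz : g * qh * a = 0
  · rw [hxz]; exact Submodule.zero_mem _
  have ha0 : a ≠ 0 := by rintro rfl; simp at hxz
  have hb0 : b ≠ 0 := by
    rintro rfl; rw [mul_zero] at hab; exact hxz hab
  have hcan : qh * a = ph * b := by
    apply mul_left_cancel₀ hg
    rw [← mul_assoc, ← mul_assoc, hab]
  have hdvd : ph ∣ a := hrel.dvd_of_dvd_mul_left ⟨b, hcan⟩
  obtain ⟨c, rfl⟩ := hdvd
  have hc0 : c ≠ 0 := by rintro rfl; simp at ha0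
  have hdeg : c.totalDegree ≤ mq - ph.totalDegree := by
    have hme := totalDegree_mul_eq hph hc0
    omega
  refine mem_Mg.mpr ⟨c, hdeg, by ring⟩

lemma inf_Mg_eq_bot {g qh ph : Pl} (hg : g ≠ 0) (hph : ph ≠ 0)
    (hrel : IsRelPrime ph qh) {mq mp : ℕ} (hsmall : mq < ph.totalDegree) :
    Mg (g * qh) mq ⊓ Mg (g * ph) mp = ⊥ := by
  rw [Submodule.eq_bot_iff]
  rintro x ⟨hx1, hx2⟩
  obtain ⟨a, ha, rfl⟩ := mem_Mg.mp hx1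
  obtain ⟨b, hb, hab⟩ := mem_Mg.mp hx2
  by_contra hxz
  have ha0 : a ≠ 0 := by rintro rfl; simp at hxz
  have hb0 : b ≠ 0 := by
    rintro rfl; rw [mul_zero] at hab; exact hxz hab
  have hcan : qh * a = ph * b := by
    apply mul_left_cancel₀ hg
    rw [← mul_assoc, ← mul_assoc, hab]
  have hdvd : ph ∣ a := hrel.dvd_of_dvd_mul_left ⟨b, hcan⟩
  obtain ⟨c, rfl⟩ := hdvd
  have hc0 : c ≠ 0 := by rintro rfl; simp at ha0
  have hme := totalDegree_mul_eq hph hc0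
  omega

/-! ### Units, constants, maximal common divisors -/

lemma eq_C_of_deg_zero {z : Pl} (hdeg : z.totalDegree = 0) :
    z = MvPolynomial.C (MvPolynomial.coeff 0 z) := by
  have h0 := (MvPolynomial.totalDegree_eq_zero_iff (p := z)).mp hdeg
  ext d
  rw [MvPolynomial.coeff_C]
  by_cases hd : (0 : Fin 2 →₀ ℕ) = d
  · rw [if_pos hd, ← hd]
  · rw [if_neg hd]
    by_contra hc
    have hd' : d ∈ z.support := MvPolynomial.mem_support_iff.mpr hc
    exact hd (by ext x; exact (h0 d hd' x).symm)

lemma isUnit_of_deg_zero {z : Pl} (hz : z ≠ 0) (hdeg : z.totalDegree = 0) : IsUnit z := by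
  have hzC := eq_C_of_deg_zero hdeg
  have hc0 : MvPolynomial.coeff 0 z ≠ 0 := fun h => hz (by rw [hzC, h, MvPolynomial.C_0])
  rw [hzC]
  exact isUnit_iff_exists_inv.mpr ⟨MvPolynomial.C (MvPolynomial.coeff 0 z)⁻¹,
    by rw [← MvPolynomial.C_mul, mul_inv_cancel₀ hc0, MvPolynomial.C_1]⟩

lemma dvd_deg_le {e f : Pl} (hf : f ≠ 0) (h : e ∣ f) : e.totalDegree ≤ f.totalDegree := by
  obtain ⟨c, rfl⟩ := h
  have he : e ≠ 0 := by rintro rfl; simp at hf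
  have hc : c ≠ 0 := by rintro rfl; simp at hf
  rw [totalDegree_mul_eq he hc]
  omega

lemma exists_mcd {p q : Pl} (hp : p ≠ 0) (hq : q ≠ 0) :
    ∃ g ph qh : Pl, p = g * ph ∧ q = g * qh ∧ IsRelPrime ph qh := by
  set D : Set ℕ := {d | ∃ e : Pl, e ∣ p ∧ e ∣ q ∧ e.totalDegree = d} with hD
  have hne : D.Nonempty := ⟨0, 1, one_dvd _, one_dvd _, MvPolynomial.totalDegree_one⟩
  have hbdd : BddAbove D := by
    refine ⟨q.totalDegree, ?_⟩
    rintro d ⟨e, _, heq, rfl⟩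
    exact dvd_deg_le hq heq
  have hmem := Nat.sSup_mem hne hbdd
  obtain ⟨g, hgp, hgq, hgdeg⟩ := hmem
  obtain ⟨ph, hph⟩ := hgp
  obtain ⟨qh, hqh⟩ := hgq
  refine ⟨g, ph, qh, hph, hqh, ?_⟩
  intro z hzp hzq
  have hg0 : g ≠ 0 := by rintro rfl; rw [zero_mul] at hqh; exact hq hqh
  have hph0 : ph ≠ 0 := by rintro rfl; rw [mul_zero] at hph; exact hp hph
  have hz0 : z ≠ 0 := by rintro rfl; simp at hzp; exact hph0 hzp
  have hgz : (g * z).totalDegree ∈ D := by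
    refine ⟨g * z, ?_, ?_, rfl⟩
    · obtain ⟨w, hw⟩ := hzp
      exact ⟨w, by rw [hph, hw]; ring⟩
    · obtain ⟨w, hw⟩ := hzq
      exact ⟨w, by rw [hqh, hw]; ring⟩
  have hle : (g * z).totalDegree ≤ sSup D := le_csSup hbdd hgz
  rw [totalDegree_mul_eq hg0 hz0, hgdeg] at hle
  exact isUnit_of_deg_zero hz0 (by omega)

/-! ### Two specialized lemmas -/

lemma deg_lower (n k : ℕ) (hk : k + 1 ≤ n) (X : Finset (ℝ × ℝ)) (hX : Indep n X)
    (hcard : X.card = dd n (k - 2) + 2) (hk3 : 3 ≤ k)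
    {h : Pl} (hh : h ≠ 0) (hdeg : h.totalDegree ≤ n) (hvan : ∀ A ∈ X, evalPt h A = 0) :
    k - 1 ≤ h.totalDegree := by
  by_contra hlt
  push_neg at hlt
  set D := h.totalDegree with hD
  have hle : Mg h (n - D) ≤ Sn n := Mg_le_Sn (by omega)
  have hvan' : ∀ p ∈ Mg h (n - D), ∀ A ∈ X, evalPt p A = 0 := by
    intro p hp A hA
    exact Mg_vanish hp (hvan A hA)
  have hb := card_le_of_vanish n X hX X (le_refl X) _ hle hvan'
  rw [finrank_Mg hh, hcard] at hb
  have hdd := dd_Nn n (k - 2) (by omega)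
  have hmono : Nn (n - (k - 2)) ≤ Nn (n - D) := Nn_mono (by omega)
  omega

lemma arith_contra (a k s dp F : ℕ) (ha : 1 ≤ a) (hs : s + 3 ≤ k)
    (hdp1 : k ≤ dp + 1) (hdp2 : dp ≤ k)
    (hF : (dp - s ≤ a + 1 ∧ F ≤ Nn (a + 1 - (dp - s))) ∨ F = 0)
    (hineq : (Nn (a + k) - Nn (a + 2) + 2) + Nn (a + 1) + Nn (a + k - dp)
      ≤ Nn (a + k) + F) : False := by
  have hMono : Nn (a + 2) ≤ Nn (a + k) := Nn_mono (by omega)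
  have h1 : Nn (a + 2) = Nn (a + 1) + (a + 3) := by
    have h := Nn_succ (a + 1)
    rw [show a + 1 + 1 = a + 2 by omega] at h
    omega
  have hp1 := Nn_pos (a - 1)
  have hp2 := Nn_pos (a - 2)
  have h2 : Nn (a + 1) = Nn a + (a + 2) := Nn_succ a
  have h3 : Nn a = Nn (a - 1) + (a + 1) := by
    have h := Nn_succ (a - 1)
    rw [show a - 1 + 1 = a by omega] at h
    omega
  rcases (show dp = k ∨ dp = k - 1 by omega) with hdp | hdp
  · subst hdp
    rw [show a + dp - dp = a by omega] at hineq
    have hdph : 3 ≤ dp - s := by omega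
    rcases hF with ⟨hle, hF⟩ | hF
    · have ha2 : 2 ≤ a := by omega
      have h4 : Nn (a - 1) = Nn (a - 2) + a := by
        have h := Nn_succ (a - 2)
        rw [show a - 2 + 1 = a - 1 by omega] at h
        omega
      have hmm : Nn (a + 1 - (dp - s)) ≤ Nn (a - 2) := Nn_mono (by omega)
      omega
    · omega
  · subst hdp
    rw [show a + k - (k - 1) = a + 1 by omega] at hineq
    have hdph : 2 ≤ (k - 1) - s := by omega
    rcases hF with ⟨hle, hF⟩ | hF
    · have hmm : Nn (a + 1 - (k - 1 - s)) ≤ Nn (a - 1) := Nn_mono (by omega)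
      omega
    · omega

end
end Th17

theorem stmt17 (n k : ℕ) (hk : k + 1 ≤ n) (X : Finset (ℝ × ℝ))
    (hX : Indep n X) (hcard : X.card = dd n (k - 2) + 2)
    (h4 : ∃ p : Fin 4 → MvPolynomial (Fin 2) ℝ, LinearIndependent ℝ p ∧
      ∀ i, (p i).totalDegree ≤ k ∧ ∀ A ∈ X, evalPt (p i) A = 0)
    (hq : ∃ q : MvPolynomial (Fin 2) ℝ, q ≠ 0 ∧ q.totalDegree ≤ k - 1 ∧
      ∀ A ∈ X, evalPt q A = 0) :
    ∃ μ : MvPolynomial (Fin 2) ℝ, μ.totalDegree = k - 2 ∧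
      (X.filter (fun A => evalPt μ A = 0)).card = dd n (k - 2) := by
  open Th17 in
  obtain ⟨q, hq0, hqdeg, hqvan⟩ := hq
  by_cases hk3 : k ≤ 2
  · by_cases hk2 : k = 2
    · refine ⟨1, by simp [MvPolynomial.totalDegree_one, hk2], ?_⟩
      have hf : X.filter (fun A => evalPt (1 : Th17.Pl) A = 0) = ∅ := by
        apply Finset.filter_false_of_mem
        intro A _
        rw [Th17.evalPt_one]; norm_num
      rw [hf]
      simp [hk2, dd]
    · exfalso
      have hXne : X.Nonempty := by
        rw [← Finset.card_pos, hcard]; omega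
      obtain ⟨A, hA⟩ := hXne
      have hdeg0 : q.totalDegree = 0 := by omega
      have hqC := Th17.eq_C_of_deg_zero hdeg0
      have hcoeff : MvPolynomial.coeff 0 q ≠ 0 := by
        intro h0
        exact hq0 (by rw [hqC, h0, MvPolynomial.C_0])
      have hv := hqvan A hA
      rw [hqC, Th17.evalPt_C] at hv
      exact hcoeff hv
  push_neg at hk3
  have hk3' : 3 ≤ k := hk3
  have hqdeg' : q.totalDegree = k - 1 :=
    le_antisymm hqdeg (Th17.deg_lower n k hk X hX hcard hk3' hq0 (by omega) hqvan)
  obtain ⟨pf, hpf_li, hpf⟩ := h4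
  have hexists : ∃ i, ¬ q ∣ pf i := by
    by_contra hall
    push_neg at hall
    choose h hh using hall
    have hli : LinearIndependent ℝ h := by
      apply LinearIndependent.of_comp (LinearMap.mulLeft ℝ q)
      have hc : (LinearMap.mulLeft ℝ q) ∘ h = pf := by
        funext i
        simp only [Function.comp_apply, LinearMap.mulLeft_apply]
        exact (hh i).symm
      rw [hc]
      exact hpf_li
    have hmem : ∀ i, h i ∈ Th17.Sn 1 := by
      intro i
      rw [MvPolynomial.mem_restrictTotalDegree]
      have hpi0 : pf i ≠ 0 := hpf_li.ne_zero i
      have hhi0 : h i ≠ 0 := by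
        intro hzz
        apply hpi0
        rw [hh i, hzz, mul_zero]
      have hmul := Th17.totalDegree_mul_eq hq0 hhi0
      have hdegpi := (hpf i).1
      rw [← hh i] at hmul
      omega
    have hliS : LinearIndependent ℝ (fun i => (⟨h i, hmem i⟩ : ↥(Th17.Sn 1))) := by
      apply LinearIndependent.of_comp ((Th17.Sn 1).subtype)
      exact hli
    have hcard4 := LinearIndependent.fintype_card_le_finrank hliS
    rw [Th17.finrank_restrict 1] at hcard4
    have h3 : Th17.Nn 1 = 3 := rfl
    rw [h3] at hcard4
    simp at hcard4
  obtain ⟨i0, hqndvd⟩ := hexists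
  set p := pf i0 with hpdef
  have hp0 : p ≠ 0 := fun h0 => hqndvd (h0 ▸ dvd_zero q)
  have hpvan : ∀ A ∈ X, evalPt p A = 0 := (hpf i0).2
  have hpdegk : p.totalDegree ≤ k := (hpf i0).1
  have hpdlow : k - 1 ≤ p.totalDegree :=
    Th17.deg_lower n k hk X hX hcard hk3' hp0 (by omega) hpvan
  obtain ⟨g, ph, qh, hpg, hqg, hrel⟩ := Th17.exists_mcd hp0 hq0
  have hg0 : g ≠ 0 := by rintro rfl; rw [zero_mul] at hqg; exact hq0 hqg
  have hph0 : ph ≠ 0 := by rintro rfl; rw [mul_zero] at hpg; exact hp0 hpg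
  have hqh0 : qh ≠ 0 := by rintro rfl; rw [mul_zero] at hqg; exact hq0 hqg
  set s := g.totalDegree with hsdef
  set dp := p.totalDegree with hdpdef
  have hsplit_q : s + qh.totalDegree = k - 1 := by
    have hm := Th17.totalDegree_mul_eq hg0 hqh0
    rw [← hqg, hqdeg'] at hm
    omega
  have hsplit_p : s + ph.totalDegree = dp := by
    have hm := Th17.totalDegree_mul_eq hg0 hph0
    rw [← hpg] at hm
    omega
  have hqh_deg1 : 1 ≤ qh.totalDegree := by
    by_contra hz
    push_neg at hz
    have hu : IsUnit qh := Th17.isUnit_of_deg_zero hqh0 (by omega)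
    apply hqndvd
    obtain ⟨c, hc⟩ := isUnit_iff_exists_inv.mp hu
    refine ⟨c * ph, ?_⟩
    calc p = g * ph := hpg
      _ = g * (qh * c) * ph := by rw [hc, mul_one]
      _ = g * qh * (c * ph) := by ring
      _ = q * (c * ph) := by rw [← hqg]
  have hph_deg1 : 1 ≤ ph.totalDegree := by
    by_contra hz
    push_neg at hz
    omega
  have hV1le : Th17.Mg q (n - (k - 1)) ≤ Th17.Sn n := Th17.Mg_le_Sn (by omega)
  have hV2le : Th17.Mg p (n - dp) ≤ Th17.Sn n := Th17.Mg_le_Sn (by omega)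
  have hvan_sup : ∀ f ∈ Th17.Mg q (n - (k - 1)) ⊔ Th17.Mg p (n - dp),
      ∀ A ∈ X, evalPt f A = 0 := by
    intro f hf A hA
    obtain ⟨y, hy, z, hz, rfl⟩ := Submodule.mem_sup.mp hf
    rw [Th17.evalPt_add, Th17.Mg_vanish hy (hqvan A hA),
      Th17.Mg_vanish hz (hpvan A hA), add_zero]
  have hmain := Th17.card_le_of_vanish n X hX X (le_refl X) _
    (sup_le hV1le hV2le) hvan_sup
  have hinf_eq := Submodule.finrank_sup_add_finrank_inf_eq
    (Th17.Mg q (n - (k - 1))) (Th17.Mg p (n - dp))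
  rw [Th17.finrank_Mg hq0, Th17.finrank_Mg hp0] at hinf_eq
  have hqg' : Th17.Mg q (n - (k - 1)) = Th17.Mg (g * qh) (n - (k - 1)) := by rw [← hqg]
  have hpg' : Th17.Mg p (n - dp) = Th17.Mg (g * ph) (n - dp) := by rw [← hpg]
  have hF : (ph.totalDegree ≤ n - (k - 1) ∧
      Module.finrank ℝ ↥(Th17.Mg q (n - (k - 1)) ⊓ Th17.Mg p (n - dp))
        ≤ Th17.Nn (n - (k - 1) - ph.totalDegree)) ∨
      Module.finrank ℝ ↥(Th17.Mg q (n - (k - 1)) ⊓ Th17.Mg p (n - dp)) = 0 := by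
    by_cases hcmp : ph.totalDegree ≤ n - (k - 1)
    · left
      refine ⟨hcmp, ?_⟩
      have hsub := Th17.inf_Mg_le hg0 hph0 hrel (qh := qh) (mq := n - (k - 1)) (mp := n - dp)
      rw [← hqg', ← hpg'] at hsub
      have hmono := Submodule.finrank_mono hsub
      rwa [Th17.finrank_Mg (mul_ne_zero (mul_ne_zero hg0 hqh0) hph0)] at hmono
    · right
      have hbot := Th17.inf_Mg_eq_bot hg0 hph0 hrel (qh := qh)
        (mq := n - (k - 1)) (mp := n - dp) (by omega)
      rw [← hqg', ← hpg'] at hbot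
      rw [hbot]
      exact finrank_bot ℝ Th17.Pl
  by_cases hsk : s + 3 ≤ k
  · exfalso
    set a := n - k with hadef
    have hdd := dd_Nn n (k - 2) (by omega)
    apply Th17.arith_contra a k s dp
      (Module.finrank ℝ ↥(Th17.Mg q (n - (k - 1)) ⊓ Th17.Mg p (n - dp))) (by omega) hsk
      (by omega) (by omega)
    · rcases hF with ⟨hle, hb⟩ | hb
      · left
        constructor
        · omega
        · rw [show a + 1 - (dp - s) = n - (k - 1) - ph.totalDegree by omega]
          exact hb
      · right; exact hb
    · rw [show a + k - dp = n - dp by omega, show a + k = n by omega,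
        show a + 2 = n - (k - 2) by omega, show a + 1 = n - (k - 1) by omega]
      omega
  · have hs_eq : s = k - 2 := by omega
    refine ⟨g, hs_eq, ?_⟩
    set X1 := X.filter (fun A => evalPt g A = 0) with hX1
    set X2 := X.filter (fun A => ¬ evalPt g A = 0) with hX2
    have hsplitX : X1.card + X2.card = X.card :=
      Finset.card_filter_add_card_filter_not _
    have hX1le : X1.card + Th17.Nn (n - (k - 2)) ≤ Th17.Nn n := by
      have hle : Th17.Mg g (n - (k - 2)) ≤ Th17.Sn n := Th17.Mg_le_Sn (by omega)
      have hvan' : ∀ f ∈ Th17.Mg g (n - (k - 2)), ∀ A ∈ X1, evalPt f A = 0 := by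
        intro f hf A hA
        exact Th17.Mg_vanish hf (Finset.mem_filter.mp hA).2
      have hb := Th17.card_le_of_vanish n X hX X1 (Finset.filter_subset _ _) _ hle hvan'
      rwa [Th17.finrank_Mg hg0] at hb
    have hX2van : ∀ A ∈ X2, evalPt ph A = 0 ∧ evalPt qh A = 0 := by
      intro A hA
      obtain ⟨hAX, hgA⟩ := Finset.mem_filter.mp hA
      constructor
      · have hv := hpvan A hAX
        rw [hpg, Th17.evalPt_mul] at hv
        exact (mul_eq_zero.mp hv).resolve_left hgA
      · have hv := hqvan A hAX
        rw [hqg, Th17.evalPt_mul] at hv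
        exact (mul_eq_zero.mp hv).resolve_left hgA
    have hph_deg_le : ph.totalDegree ≤ 2 := by omega
    have hX2le : X2.card ≤ 2 := by
      have hW1le : Th17.Mg qh (n - 1) ≤ Th17.Sn n := Th17.Mg_le_Sn (by omega)
      have hW2le : Th17.Mg ph (n - ph.totalDegree) ≤ Th17.Sn n := Th17.Mg_le_Sn (by omega)
      have hvan' : ∀ f ∈ Th17.Mg qh (n - 1) ⊔ Th17.Mg ph (n - ph.totalDegree),
          ∀ A ∈ X2, evalPt f A = 0 := by
        intro f hf A hA
        obtain ⟨y, hy, z, hz, rfl⟩ := Submodule.mem_sup.mp hf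
        rw [Th17.evalPt_add, Th17.Mg_vanish hy (hX2van A hA).2,
          Th17.Mg_vanish hz (hX2van A hA).1, add_zero]
      have hb := Th17.card_le_of_vanish n X hX X2 (Finset.filter_subset _ _) _
        (sup_le hW1le hW2le) hvan'
      have hie := Submodule.finrank_sup_add_finrank_inf_eq
        (Th17.Mg qh (n - 1)) (Th17.Mg ph (n - ph.totalDegree))
      rw [Th17.finrank_Mg hqh0, Th17.finrank_Mg hph0] at hie
      have h1qh : Th17.Mg qh (n - 1) = Th17.Mg ((1 : Th17.Pl) * qh) (n - 1) := by rw [one_mul]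
      have h1ph : Th17.Mg ph (n - ph.totalDegree)
          = Th17.Mg ((1 : Th17.Pl) * ph) (n - ph.totalDegree) := by rw [one_mul]
      have hsub := Th17.inf_Mg_le (g := (1 : Th17.Pl)) (one_ne_zero) hph0 hrel (qh := qh)
        (mq := n - 1) (mp := n - ph.totalDegree)
      rw [← h1qh, ← h1ph] at hsub
      have hinfb := Submodule.finrank_mono hsub
      rw [Th17.finrank_Mg (mul_ne_zero (mul_ne_zero one_ne_zero hqh0) hph0)] at hinfb
      have e1 : Th17.Nn n = Th17.Nn (n - 1) + (n + 1) := by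
        have h := Th17.Nn_succ (n - 1)
        rw [show n - 1 + 1 = n by omega] at h
        omega
      have e2 : Th17.Nn (n - ph.totalDegree) =
          Th17.Nn (n - 1 - ph.totalDegree) + (n - ph.totalDegree + 1) := by
        have h := Th17.Nn_succ (n - 1 - ph.totalDegree)
        rw [show n - 1 - ph.totalDegree + 1 = n - ph.totalDegree by omega] at h
        omega
      omega
    have hdd := dd_Nn n (k - 2) (by omega)
    omega
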